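/- For even n ≥ 2, the conjugate Φ-powers are related by X^(n)(x₀,x) = n ∫_{x₀}^x X̃^(n−1)(ξ,x)/Φ(ξ) dξ; for odd n ≥ 1, X̃^(n)(x₀,x) = n ∫_{x₀}^x Φ(ξ) X^(n−1)(ξ,x) dξ. -/
import Mathlib

open MeasureTheory intervalIntegral Set

noncomputable def genX (Φ : ℝ → ℂ) : ℕ → ℝ → ℝ → ℂ
  | 0 => fun _ _ => 1
  | n + 1 => fun x₀ x =>
      (n + 1 : ℕ) * ∫ ξ in x₀..x, genX Φ n x₀ ξ * Φ ξ ^ ((-1 : ℤ) ^ (n + 1))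

noncomputable def genXt (Φ : ℝ → ℂ) : ℕ → ℝ → ℝ → ℂ
  | 0 => fun _ _ => 1
  | n + 1 => fun x₀ x =>
      (n + 1 : ℕ) * ∫ ξ in x₀..x, genXt Φ n x₀ ξ * Φ ξ ^ (-((-1 : ℤ) ^ (n + 1)))

lemma triangle_swap_le {f : ℝ → ℝ → ℂ} (hf : Continuous (Function.uncurry f)) {x₀ x : ℝ}
    (h : x₀ ≤ x) :
    ∫ ξ in x₀..x, ∫ t in x₀..ξ, f t ξ = ∫ t in x₀..x, ∫ ξ in t..x, f t ξ := by
  set S : Set (ℝ × ℝ) := {p : ℝ × ℝ | p.1 ≤ p.2} with hS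
  have hSm : MeasurableSet S := measurableSet_le measurable_fst measurable_snd
  have hK : IntegrableOn (Function.uncurry f) (Icc x₀ x ×ˢ Icc x₀ x) :=
    hf.continuousOn.integrableOn_compact (isCompact_Icc.prod isCompact_Icc)
  have integ : Integrable (Function.uncurry f)
      ((volume.restrict (Ioc x₀ x)).prod (volume.restrict (Ioc x₀ x))) := by
    rw [Measure.prod_restrict]
    have := hK.mono_set (Set.prod_mono Ioc_subset_Icc_self Ioc_subset_Icc_self)
    rwa [IntegrableOn, Measure.volume_eq_prod] at this
  have integInd : Integrable (S.indicator (Function.uncurry f))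
      ((volume.restrict (Ioc x₀ x)).prod (volume.restrict (Ioc x₀ x))) :=
    integ.indicator hSm
  have integG : Integrable (Function.uncurry (fun ξ t => S.indicator (Function.uncurry f) (t, ξ)))
      ((volume.restrict (Ioc x₀ x)).prod (volume.restrict (Ioc x₀ x))) := by
    have := integInd.swap
    exact this
  have step1 : ∫ ξ in x₀..x, (∫ t in x₀..ξ, f t ξ)
      = ∫ ξ in Ioc x₀ x, ∫ t in Ioc x₀ x, S.indicator (Function.uncurry f) (t, ξ) := by
    rw [integral_of_le h]
    apply setIntegral_congr_fun measurableSet_Ioc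
    intro ξ hξ
    have e1 : ∀ t : ℝ, S.indicator (Function.uncurry f) (t, ξ)
        = (Iic ξ).indicator (fun t => f t ξ) t := by
      intro t; by_cases ht : t ≤ ξ <;> simp [hS, Set.indicator, ht, Function.uncurry]
    simp only [e1]
    rw [setIntegral_indicator measurableSet_Iic, Ioc_inter_Iic, min_eq_right hξ.2,
      intervalIntegral.integral_of_le hξ.1.le]
  have step2 : ∫ ξ in Ioc x₀ x, ∫ t in Ioc x₀ x, S.indicator (Function.uncurry f) (t, ξ)
      = ∫ t in Ioc x₀ x, ∫ ξ in Ioc x₀ x, S.indicator (Function.uncurry f) (t, ξ) :=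
    MeasureTheory.integral_integral_swap integG
  have step3 : ∫ t in Ioc x₀ x, ∫ ξ in Ioc x₀ x, S.indicator (Function.uncurry f) (t, ξ)
      = ∫ t in x₀..x, ∫ ξ in t..x, f t ξ := by
    rw [integral_of_le h]
    apply setIntegral_congr_fun measurableSet_Ioc
    intro t ht
    have e1 : ∀ ξ : ℝ, S.indicator (Function.uncurry f) (t, ξ)
        = (Ici t).indicator (fun ξ => f t ξ) ξ := by
      intro ξ; by_cases h' : t ≤ ξ <;> simp [hS, Set.indicator, h', Function.uncurry]
    simp only [e1]
    rw [setIntegral_indicator measurableSet_Ici]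
    have hset : Ioc x₀ x ∩ Ici t = Icc t x := by
      ext ξ
      simp only [mem_inter_iff, mem_Ioc, mem_Ici, mem_Icc]
      exact ⟨fun ⟨⟨_, h2⟩, h3⟩ => ⟨h3, h2⟩, fun ⟨h1, h2⟩ => ⟨⟨lt_of_lt_of_le ht.1 h1, h2⟩, h1⟩⟩
    rw [hset, integral_Icc_eq_integral_Ioc, intervalIntegral.integral_of_le ht.2]
  rw [step1, step2, step3]

lemma triangle_swap {f : ℝ → ℝ → ℂ} (hf : Continuous (Function.uncurry f)) (x₀ x : ℝ) :
    ∫ ξ in x₀..x, ∫ t in x₀..ξ, f t ξ = ∫ t in x₀..x, ∫ ξ in t..x, f t ξ := by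
  rcases le_total x₀ x with h | h
  · exact triangle_swap_le hf h
  · have hg : Continuous (Function.uncurry (fun ξ t => f t ξ)) := by
      have : Function.uncurry (fun ξ t : ℝ => f t ξ) = Function.uncurry f ∘ Prod.swap := rfl
      rw [this]; exact hf.comp continuous_swap
    have key := triangle_swap_le hg h
    calc ∫ ξ in x₀..x, ∫ t in x₀..ξ, f t ξ
        = ∫ ξ in x..x₀, ∫ t in ξ..x₀, f t ξ := by
          rw [intervalIntegral.integral_symm x₀ x]
          rw [← intervalIntegral.integral_neg]
          congr 1; funext ξ; rw [intervalIntegral.integral_symm]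
      _ = ∫ t in x..x₀, ∫ ξ in x..t, f t ξ := (key).symm
      _ = ∫ t in x₀..x, ∫ ξ in t..x, f t ξ := by
          rw [intervalIntegral.integral_symm x₀ x]
          rw [← intervalIntegral.integral_neg]
          congr 1; funext t; rw [intervalIntegral.integral_symm, neg_neg]

lemma cont_param {f : ℝ × ℝ → ℝ → ℂ} (hf : Continuous (Function.uncurry f)) :
    Continuous (fun p : ℝ × ℝ => ∫ ξ in p.1..p.2, f p ξ) := by
  have h1 : Continuous (fun p : ℝ × ℝ => ∫ ξ in (0:ℝ)..p.2, f p ξ) :=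
    continuous_parametric_intervalIntegral_of_continuous hf continuous_snd
  have h2 : Continuous (fun p : ℝ × ℝ => ∫ ξ in (0:ℝ)..p.1, f p ξ) :=
    continuous_parametric_intervalIntegral_of_continuous hf continuous_fst
  have key : ∀ p : ℝ × ℝ, ∫ ξ in p.1..p.2, f p ξ
      = (∫ ξ in (0:ℝ)..p.2, f p ξ) - ∫ ξ in (0:ℝ)..p.1, f p ξ := by
    intro p
    rw [intervalIntegral.integral_interval_sub_left]
    · exact ((hf.comp (Continuous.prodMk_right p)).intervalIntegrable _ _)
    · exact ((hf.comp (Continuous.prodMk_right p)).intervalIntegrable _ _)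
  simp only [key]
  exact h1.sub h2

lemma cont_pow {Ψ : ℝ → ℂ} (hc : Continuous Ψ) (h0 : ∀ y, Ψ y ≠ 0) (m : ℤ)
    (hm : m = 1 ∨ m = -1) : Continuous (fun ξ => Ψ ξ ^ m) := by
  rcases hm with rfl | rfl
  · simpa using hc
  · simp only [zpow_neg, zpow_one]
    exact hc.inv₀ h0

lemma neg_one_pow_cases (k : ℕ) : ((-1 : ℤ) ^ k = 1 ∨ (-1 : ℤ) ^ k = -1) := by
  rcases Nat.even_or_odd k with h | h
  · left; exact h.neg_one_pow
  · right; exact h.neg_one_pow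

lemma genX_cont {Ψ : ℝ → ℂ} (hc : Continuous Ψ) (h0 : ∀ y, Ψ y ≠ 0) (n : ℕ) :
    Continuous (fun p : ℝ × ℝ => genX Ψ n p.1 p.2) := by
  induction n with
  | zero => simp only [genX]; exact continuous_const
  | succ n ih =>
    simp only [genX]
    apply Continuous.mul continuous_const
    apply cont_param
    have : Continuous (fun q : (ℝ × ℝ) × ℝ => genX Ψ n q.1.1 q.2 * Ψ q.2 ^ ((-1:ℤ) ^ (n+1))) :=
      (ih.comp (continuous_fst.fst.prodMk continuous_snd)).mul
        ((cont_pow hc h0 _ (neg_one_pow_cases (n+1))).comp continuous_snd)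
    exact this

lemma genXt_cont {Ψ : ℝ → ℂ} (hc : Continuous Ψ) (h0 : ∀ y, Ψ y ≠ 0) (n : ℕ) :
    Continuous (fun p : ℝ × ℝ => genXt Ψ n p.1 p.2) := by
  induction n with
  | zero => simp only [genXt]; exact continuous_const
  | succ n ih =>
    simp only [genXt]
    apply Continuous.mul continuous_const
    apply cont_param
    have hp : Continuous (fun ξ => Ψ ξ ^ (-((-1:ℤ) ^ (n+1)))) := by
      refine cont_pow hc h0 _ ?_
      rcases neg_one_pow_cases (n+1) with h | h <;> simp [h]
    have : Continuous (fun q : (ℝ × ℝ) × ℝ => genXt Ψ n q.1.1 q.2 * Ψ q.2 ^ (-((-1:ℤ) ^ (n+1)))) :=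
      (ih.comp (continuous_fst.fst.prodMk continuous_snd)).mul (hp.comp continuous_snd)
    exact this

lemma genX_swap {Ψ : ℝ → ℂ} (hc : Continuous Ψ) (h0 : ∀ y, Ψ y ≠ 0) (n : ℕ) (x₀ x : ℝ) :
    genX Ψ (n + 1) x₀ x = ((n + 1 : ℕ) : ℂ) * ∫ ξ in x₀..x, genXt Ψ n ξ x / Ψ ξ := by
  induction n generalizing x₀ x with
  | zero =>
    simp only [genX, genXt, pow_one, zpow_neg, zpow_one, one_mul, Nat.cast_one]
    congr 1
    apply intervalIntegral.integral_congr
    intro ξ _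
    simp [one_div]
  | succ n ih =>
    set e : ℤ := (-1 : ℤ) ^ (n + 1 + 1) with he
    have hee : -((-1 : ℤ) ^ (n + 1)) = e := by rw [he, pow_succ]; ring
    have hgenXt : ∀ t y : ℝ, genXt Ψ (n + 1) t y
        = ((n + 1 : ℕ) : ℂ) * ∫ ξ in t..y, genXt Ψ n t ξ * Ψ ξ ^ e := by
      intro t y
      rw [genXt]
      simp_rw [hee]
    have hecase : e = 1 ∨ e = -1 := neg_one_pow_cases _
    set F : ℝ → ℝ → ℂ := fun t ξ => (Ψ t)⁻¹ * (((n + 1 : ℕ) : ℂ) * (genXt Ψ n t ξ * Ψ ξ ^ e))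
      with hF
    have hFcont : Continuous (Function.uncurry F) := by
      have : Continuous (fun q : ℝ × ℝ =>
          (Ψ q.1)⁻¹ * (((n + 1 : ℕ) : ℂ) * (genXt Ψ n q.1 q.2 * Ψ q.2 ^ e))) := by
        refine ((hc.comp continuous_fst).inv₀ (fun q => h0 _)).mul
          (continuous_const.mul (((genXt_cont hc h0 n)).mul
            ((cont_pow hc h0 e hecase).comp continuous_snd)))
      exact this
    have inner_eq : ∀ ξ : ℝ, genX Ψ (n + 1) x₀ ξ * Ψ ξ ^ e = ∫ t in x₀..ξ, F t ξ := by
      intro ξ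
      rw [ih x₀ ξ]
      have : ∀ t : ℝ, F t ξ = (((n + 1 : ℕ) : ℂ) * (genXt Ψ n t ξ / Ψ t)) * Ψ ξ ^ e := by
        intro t; rw [hF]; ring
      simp_rw [this]
      rw [intervalIntegral.integral_mul_const, intervalIntegral.integral_const_mul]
    calc genX Ψ (n + 1 + 1) x₀ x
        = ((n + 1 + 1 : ℕ) : ℂ) * ∫ ξ in x₀..x, genX Ψ (n + 1) x₀ ξ * Ψ ξ ^ e := by
          rw [genX]
      _ = ((n + 1 + 1 : ℕ) : ℂ) * ∫ ξ in x₀..x, ∫ t in x₀..ξ, F t ξ := by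
          congr 1; exact intervalIntegral.integral_congr (fun ξ _ => inner_eq ξ)
      _ = ((n + 1 + 1 : ℕ) : ℂ) * ∫ t in x₀..x, ∫ ξ in t..x, F t ξ := by
          rw [triangle_swap hFcont]
      _ = ((n + 1 + 1 : ℕ) : ℂ) * ∫ t in x₀..x, genXt Ψ (n + 1) t x / Ψ t := by
          congr 1
          refine intervalIntegral.integral_congr (fun t _ => ?_)
          rw [hF]
          simp only
          rw [intervalIntegral.integral_const_mul, intervalIntegral.integral_const_mul,
            ← hgenXt t x, inv_mul_eq_div]

lemma genXt_swap {Ψ : ℝ → ℂ} (hc : Continuous Ψ) (h0 : ∀ y, Ψ y ≠ 0) (n : ℕ) (x₀ x : ℝ) :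
    genXt Ψ (n + 1) x₀ x = ((n + 1 : ℕ) : ℂ) * ∫ ξ in x₀..x, Ψ ξ * genX Ψ n ξ x := by
  induction n generalizing x₀ x with
  | zero =>
    simp only [genX, genXt, pow_one, neg_neg, zpow_one, one_mul, Nat.cast_one]
    congr 1
    exact intervalIntegral.integral_congr (fun ξ _ => by simp [mul_comm])
  | succ n ih =>
    set e : ℤ := (-1 : ℤ) ^ (n + 1) with he
    have hee : -((-1 : ℤ) ^ (n + 1 + 1)) = e := by rw [he, pow_succ]; ring
    have hgenX : ∀ t y : ℝ, genX Ψ (n + 1) t y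
        = ((n + 1 : ℕ) : ℂ) * ∫ ξ in t..y, genX Ψ n t ξ * Ψ ξ ^ e := by
      intro t y
      rw [genX]
    have hecase : e = 1 ∨ e = -1 := neg_one_pow_cases _
    set F : ℝ → ℝ → ℂ := fun t ξ => Ψ t * (((n + 1 : ℕ) : ℂ) * (genX Ψ n t ξ * Ψ ξ ^ e))
      with hF
    have hFcont : Continuous (Function.uncurry F) := by
      have : Continuous (fun q : ℝ × ℝ =>
          Ψ q.1 * (((n + 1 : ℕ) : ℂ) * (genX Ψ n q.1 q.2 * Ψ q.2 ^ e))) :=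
        (hc.comp continuous_fst).mul
          (continuous_const.mul (((genX_cont hc h0 n)).mul
            ((cont_pow hc h0 e hecase).comp continuous_snd)))
      exact this
    have inner_eq : ∀ ξ : ℝ, genXt Ψ (n + 1) x₀ ξ * Ψ ξ ^ e = ∫ t in x₀..ξ, F t ξ := by
      intro ξ
      rw [ih x₀ ξ]
      have : ∀ t : ℝ, F t ξ = (((n + 1 : ℕ) : ℂ) * (Ψ t * genX Ψ n t ξ)) * Ψ ξ ^ e := by
        intro t; rw [hF]; ring
      simp_rw [this]
      rw [intervalIntegral.integral_mul_const, intervalIntegral.integral_const_mul]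
    calc genXt Ψ (n + 1 + 1) x₀ x
        = ((n + 1 + 1 : ℕ) : ℂ) * ∫ ξ in x₀..x, genXt Ψ (n + 1) x₀ ξ * Ψ ξ ^ e := by
          rw [genXt]
          simp_rw [hee]
      _ = ((n + 1 + 1 : ℕ) : ℂ) * ∫ ξ in x₀..x, ∫ t in x₀..ξ, F t ξ := by
          congr 1; exact intervalIntegral.integral_congr (fun ξ _ => inner_eq ξ)
      _ = ((n + 1 + 1 : ℕ) : ℂ) * ∫ t in x₀..x, ∫ ξ in t..x, F t ξ := by
          rw [triangle_swap hFcont]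
      _ = ((n + 1 + 1 : ℕ) : ℂ) * ∫ t in x₀..x, Ψ t * genX Ψ (n + 1) t x := by
          congr 1
          refine intervalIntegral.integral_congr (fun t _ => ?_)
          rw [hF]
          simp only
          rw [intervalIntegral.integral_const_mul, intervalIntegral.integral_const_mul,
            ← hgenX t x]

lemma genX_congr {Φ Ψ : ℝ → ℂ} {a b : ℝ} (h : Set.EqOn Φ Ψ (Icc a b)) (n : ℕ) :
    ∀ x₀ ∈ Icc a b, ∀ x ∈ Icc a b, genX Φ n x₀ x = genX Ψ n x₀ x := by
  induction n with
  | zero => intro _ _ _ _; simp [genX]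
  | succ n ih =>
    intro x₀ hx₀ x hx
    rw [genX, genX]
    have : (∫ ξ in x₀..x, genX Φ n x₀ ξ * Φ ξ ^ ((-1:ℤ) ^ (n+1)))
        = ∫ ξ in x₀..x, genX Ψ n x₀ ξ * Ψ ξ ^ ((-1:ℤ) ^ (n+1)) := by
      refine intervalIntegral.integral_congr (fun ξ hξ => ?_)
      have hξ' : ξ ∈ Icc a b := uIcc_subset_Icc hx₀ hx hξ
      rw [ih x₀ hx₀ ξ hξ', h hξ']
    exact congrArg (fun z => ((n + 1 : ℕ) : ℂ) * z) this

lemma genXt_congr {Φ Ψ : ℝ → ℂ} {a b : ℝ} (h : Set.EqOn Φ Ψ (Icc a b)) (n : ℕ) :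
    ∀ x₀ ∈ Icc a b, ∀ x ∈ Icc a b, genXt Φ n x₀ x = genXt Ψ n x₀ x := by
  induction n with
  | zero => intro _ _ _ _; simp [genXt]
  | succ n ih =>
    intro x₀ hx₀ x hx
    rw [genXt, genXt]
    have : (∫ ξ in x₀..x, genXt Φ n x₀ ξ * Φ ξ ^ (-((-1:ℤ) ^ (n+1))))
        = ∫ ξ in x₀..x, genXt Ψ n x₀ ξ * Ψ ξ ^ (-((-1:ℤ) ^ (n+1))) := by
      refine intervalIntegral.integral_congr (fun ξ hξ => ?_)
      have hξ' : ξ ∈ Icc a b := uIcc_subset_Icc hx₀ hx hξ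
      rw [ih x₀ hx₀ ξ hξ', h hξ']
    exact congrArg (fun z => ((n + 1 : ℕ) : ℂ) * z) this

theorem stmt_7 (a b : ℝ) (Φ : ℝ → ℂ) (hΦc : ContinuousOn Φ (Set.Icc a b))
    (hΦ0 : ∀ y ∈ Set.Icc a b, Φ y ≠ 0) (x₀ x : ℝ)
    (hx₀ : x₀ ∈ Set.Icc a b) (hx : x ∈ Set.Icc a b) (n : ℕ) :
    (Even n → 2 ≤ n →
      genX Φ n x₀ x = (n : ℂ) * ∫ ξ in x₀..x, genXt Φ (n - 1) ξ x / Φ ξ) ∧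
    (Odd n →
      genXt Φ n x₀ x = (n : ℂ) * ∫ ξ in x₀..x, Φ ξ * genX Φ (n - 1) ξ x) := by
  have hab : a ≤ b := hx₀.1.trans hx₀.2
  set c : ℝ → ℝ := fun y => min b (max a y) with hcdef
  have hccont : Continuous c := continuous_const.min (continuous_const.max continuous_id)
  have hmem : ∀ y, c y ∈ Icc a b := fun y =>
    ⟨le_min hab (le_max_left a y), min_le_left b _⟩
  set Ψ : ℝ → ℂ := fun y => Φ (c y) with hΨdef
  have hΨc : Continuous Ψ := hΦc.comp_continuous hccont hmem
  have hΨ0 : ∀ y, Ψ y ≠ 0 := fun y => hΦ0 _ (hmem y)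
  have hEq : Set.EqOn Φ Ψ (Icc a b) := by
    intro y hy
    have : c y = y := by
      rw [hcdef]
      simp only
      rw [max_eq_right hy.1, min_eq_right hy.2]
    rw [hΨdef]
    simp only [this]
  constructor
  · intro _ h2
    obtain ⟨k, rfl⟩ : ∃ k, n = k + 1 := ⟨n - 1, by omega⟩
    rw [genX_congr hEq (k + 1) x₀ hx₀ x hx, genX_swap hΨc hΨ0 k x₀ x]
    simp only [Nat.add_sub_cancel]
    congr 1
    refine intervalIntegral.integral_congr (fun ξ hξ => ?_)
    have hξ' : ξ ∈ Icc a b := uIcc_subset_Icc hx₀ hx hξ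
    rw [genXt_congr hEq k ξ hξ' x hx, hEq hξ']
  · intro hodd
    obtain ⟨k, rfl⟩ : ∃ k, n = k + 1 := ⟨n - 1, by have := hodd.pos; omega⟩
    rw [genXt_congr hEq (k + 1) x₀ hx₀ x hx, genXt_swap hΨc hΨ0 k x₀ x]
    simp only [Nat.add_sub_cancel]
    congr 1
    refine intervalIntegral.integral_congr (fun ξ hξ => ?_)
    have hξ' : ξ ∈ Icc a b := uIcc_subset_Icc hx₀ hx hξ
    rw [genX_congr hEq k ξ hξ' x hx, hEq hξ']
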